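/- Let x₀ ∈ ℝ and let u be eight times continuously differentiable on a neighborhood of x₀. Define, for h > 0, T(h) = (12/(11h²))·(u(x₀−h) + u(x₀+h)) + (3/(44h²))·(u(x₀−2h) + u(x₀+2h)) − (51/(22h²))·u(x₀) − (2/11)·(u''(x₀−h) + u''(x₀+h)) − u''(x₀). Then T(h) = O(h⁶) as h → 0⁺. -/

import Mathlib

set_option maxHeartbeats 2000000

open Filter Topology Asymptotics


lemma taylor_remainder_isBigO (n : ℕ) :
    ∀ (f : ℝ → ℝ) (x₀ : ℝ) (t : Set ℝ), IsOpen t → x₀ ∈ t → ContDiffOn ℝ (n + 1 : ℕ) f t →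
    (fun y : ℝ => f (x₀ + y) -
        ∑ k ∈ Finset.range (n + 1), iteratedDeriv k f x₀ / (k.factorial : ℝ) * y ^ k)
      =O[𝓝 (0 : ℝ)] fun y => y ^ (n + 1) := by
  induction n with
  | zero =>
    intro f x₀ t ht hx hf
    have hd : HasDerivAt f (deriv f x₀) x₀ :=
      ((hf.contDiffAt (ht.mem_nhds hx)).differentiableAt (by norm_num)).hasDerivAt
    have h2 : (fun y : ℝ => f (x₀ + y) - f x₀ - y * deriv f x₀) =o[𝓝 0] (fun y => y) := by
      have hT : Tendsto (fun y : ℝ => x₀ + y) (𝓝 0) (𝓝 x₀) := by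
        have := (tendsto_const_nhds (x := x₀) (f := 𝓝 (0:ℝ))).add tendsto_id
        simpa using this
      have := (hasDerivAt_iff_isLittleO.mp hd).comp_tendsto hT
      refine (this.congr ?_ ?_) <;> intro y <;> simp [Function.comp] <;> ring
    have h4 : (fun y : ℝ => y * deriv f x₀) =O[𝓝 (0:ℝ)] fun y => y := by
      refine IsBigO.of_bound ‖deriv f x₀‖ (Filter.Eventually.of_forall fun y => ?_)
      rw [norm_mul]; exact le_of_eq (mul_comm _ _)
    have h3 : (fun y : ℝ => f (x₀ + y) - f x₀) =O[𝓝 (0:ℝ)] fun y => y := by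
      have := h2.isBigO.add h4
      refine this.congr_left fun y => by ring
    simpa [Finset.sum_range_one] using h3
  | succ n ih =>
    intro f x₀ t ht hx hf
    set g := deriv f with hgdef
    have hg : ContDiffOn ℝ (n + 1 : ℕ) g t := by
      apply hf.deriv_of_isOpen ht
      norm_cast
    have hS := ih g x₀ t ht hx hg
    obtain ⟨C₀, hC₀⟩ := isBigO_iff.mp hS
    set C := max C₀ 0 with hCdef
    have hC : ∀ᶠ y in 𝓝 (0:ℝ), ‖g (x₀ + y) -
        ∑ k ∈ Finset.range (n + 1), iteratedDeriv k g x₀ / (k.factorial : ℝ) * y ^ k‖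
        ≤ C * |y| ^ (n + 1) := by
      filter_upwards [hC₀] with y hy
      calc _ ≤ C₀ * ‖y ^ (n+1)‖ := hy
        _ ≤ C * |y| ^ (n+1) := by
            rw [norm_pow, Real.norm_eq_abs]
            exact mul_le_mul_of_nonneg_right (le_max_left _ _) (by positivity)
    obtain ⟨ε₁, hε₁, hSb⟩ := Metric.eventually_nhds_iff.mp hC
    obtain ⟨ε₂, hε₂, hball⟩ := Metric.isOpen_iff.mp ht x₀ hx
    set ε := min ε₁ ε₂ with hεdef
    have hε : 0 < ε := lt_min hε₁ hε₂
    -- coefficients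
    set a : ℕ → ℝ := fun k => iteratedDeriv k f x₀ / (k.factorial : ℝ) with hadef
    set R : ℝ → ℝ := fun y => f (x₀ + y) - ∑ k ∈ Finset.range (n + 2), a k * y ^ k with hRdef
    set S : ℝ → ℝ := fun y => g (x₀ + y) -
        ∑ k ∈ Finset.range (n + 1), iteratedDeriv k g x₀ / (k.factorial : ℝ) * y ^ k with hSdef
    have key : ∀ y : ℝ, |y| < ε → HasDerivAt R (S y) y := by
      intro y hy
      have hmem : x₀ + y ∈ t := by
        apply hball
        simp only [Metric.mem_ball, dist_self_add_left, Real.norm_eq_abs]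
        exact hy.trans_le (min_le_right _ _)
      have hdf : HasDerivAt f (g (x₀ + y)) (x₀ + y) :=
        ((hf.contDiffAt (ht.mem_nhds hmem)).differentiableAt (by norm_num)).hasDerivAt
      have h1 : HasDerivAt (fun z : ℝ => f (x₀ + z)) (g (x₀ + y)) y := by
        have := HasDerivAt.comp y hdf ((hasDerivAt_id y).const_add x₀)
        rw [mul_one] at this
        exact this
      have h2 : HasDerivAt (fun z : ℝ => ∑ k ∈ Finset.range (n + 2), a k * z ^ k)
          (∑ k ∈ Finset.range (n + 1), iteratedDeriv k g x₀ / (k.factorial : ℝ) * y ^ k) y := by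
        have h3 : HasDerivAt (fun z : ℝ => ∑ k ∈ Finset.range (n + 2), a k * z ^ k)
            (∑ k ∈ Finset.range (n + 2), a k * (k * y ^ (k - 1))) y :=
          by
            have := HasDerivAt.sum fun k (_ : k ∈ Finset.range (n + 2)) =>
              (hasDerivAt_pow k y).const_mul (a k)
            have e : (fun z : ℝ => ∑ k ∈ Finset.range (n + 2), a k * z ^ k) =
                ∑ i ∈ Finset.range (n + 2), fun y : ℝ => a i * y ^ i := by
              funext z
              simp only [Finset.sum_apply]
            rw [e]
            exact this
        convert h3 using 1
        rw [Finset.sum_range_succ' (fun k => a k * (k * y ^ (k - 1))) (n + 1)]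
        simp only [Nat.cast_zero, zero_mul, mul_zero, pow_zero, Nat.add_sub_cancel, add_zero,
          Nat.cast_ofNat, Nat.cast_add, Nat.cast_one]
        apply Finset.sum_congr rfl
        intro k _
        have hcoef : iteratedDeriv k g x₀ / (k.factorial : ℝ) = a (k + 1) * ((k : ℝ) + 1) := by
          have hig : iteratedDeriv (k + 1) f = iteratedDeriv k g := by
            rw [hgdef]; exact iteratedDeriv_succ'
          simp only [hadef]
          rw [← hig, Nat.factorial_succ]
          push_cast
          have hk : (k.factorial : ℝ) ≠ 0 := by positivity
          field_simp
        rw [hcoef]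
        ring
      exact h1.sub h2
    -- MVT on symmetric interval
    have hR0 : R 0 = 0 := by
      simp [hRdef, hadef, Finset.sum_range_succ']
    have bound : ∀ y : ℝ, |y| < ε → ‖R y‖ ≤ C * |y| ^ (n + 1) * ‖y‖ := by
      intro y hy
      have hconv : Convex ℝ (Set.Icc (-|y|) |y|) := convex_Icc _ _
      have hmsub : ∀ z ∈ Set.Icc (-|y|) (|y|), |z| < ε := by
        intro z hz
        exact lt_of_le_of_lt (abs_le.mpr ⟨hz.1, hz.2⟩) hy
      have hder : ∀ z ∈ Set.Icc (-|y|) (|y|),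
          HasDerivWithinAt R (S z) (Set.Icc (-|y|) (|y|)) z := fun z hz =>
        (key z (hmsub z hz)).hasDerivWithinAt
      have hbd : ∀ z ∈ Set.Icc (-|y|) (|y|), ‖S z‖ ≤ C * |y| ^ (n + 1) := by
        intro z hz
        have h1 : ‖S z‖ ≤ C * |z| ^ (n + 1) := by
          apply hSb
          rw [Real.dist_eq, sub_zero]
          exact (hmsub z hz).trans_le (min_le_left _ _)
        refine h1.trans ?_
        have hCnn : 0 ≤ C := le_max_right _ _
        exact mul_le_mul_of_nonneg_left
          (pow_le_pow_left₀ (abs_nonneg z) (abs_le.mpr ⟨hz.1, hz.2⟩) _) hCnn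
      have h0mem : (0:ℝ) ∈ Set.Icc (-|y|) (|y|) := by
        constructor <;> simp [abs_nonneg y, neg_nonpos.mpr (abs_nonneg y)]
      have hymem : y ∈ Set.Icc (-|y|) (|y|) := by
        constructor
        · exact neg_abs_le y
        · exact le_abs_self y
      have := hconv.norm_image_sub_le_of_norm_hasDerivWithin_le hder hbd h0mem hymem
      rw [hR0, sub_zero, sub_zero] at this
      exact this
    rw [isBigO_iff]
    refine ⟨C, Metric.eventually_nhds_iff.mpr ⟨ε, hε, fun y hy => ?_⟩⟩
    rw [Real.dist_eq, sub_zero] at hy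
    have := bound y hy
    refine this.trans (le_of_eq ?_)
    simp only [Real.norm_eq_abs, abs_pow]
    ring

lemma taylor_comp_isBigO (n : ℕ) (c : ℝ) (f : ℝ → ℝ) (x₀ : ℝ) (t : Set ℝ)
    (ht : IsOpen t) (hx : x₀ ∈ t) (hf : ContDiffOn ℝ (n + 1 : ℕ) f t) :
    (fun h : ℝ => f (x₀ + c * h) -
        ∑ k ∈ Finset.range (n + 1), iteratedDeriv k f x₀ / (k.factorial : ℝ) * (c * h) ^ k)
      =O[𝓝 (0 : ℝ)] fun h => h ^ (n + 1) := by
  have h0 := taylor_remainder_isBigO n f x₀ t ht hx hf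
  have hT : Tendsto (fun h : ℝ => c * h) (𝓝 0) (𝓝 0) := by
    simpa using (tendsto_id (x := 𝓝 (0:ℝ))).const_mul c
  have h1 := h0.comp_tendsto hT
  simp only [Function.comp_def] at h1
  refine h1.trans ?_
  refine IsBigO.of_bound (|c| ^ (n + 1)) (Eventually.of_forall fun h => ?_)
  simp only [Real.norm_eq_abs, abs_pow, abs_mul, mul_pow]
  exact le_of_eq rfl

theorem compact_fd6_second_deriv_bigO (x₀ : ℝ) (u : ℝ → ℝ)
    (s : Set ℝ) (hs : s ∈ 𝓝 x₀) (hu : ContDiffOn ℝ 8 u s) :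
    (fun h : ℝ =>
        12 / (11 * h ^ 2) * (u (x₀ - h) + u (x₀ + h)) +
        3 / (44 * h ^ 2) * (u (x₀ - 2 * h) + u (x₀ + 2 * h)) -
        51 / (22 * h ^ 2) * u x₀ -
        2 / 11 * (iteratedDeriv 2 u (x₀ - h) + iteratedDeriv 2 u (x₀ + h)) -
        iteratedDeriv 2 u x₀)
      =O[𝓝[>] 0] fun h : ℝ => h ^ 6 := by
  set t : Set ℝ := interior s with htdef
  have ht : IsOpen t := isOpen_interior
  have hx : x₀ ∈ t := mem_interior_iff_mem_nhds.mpr hs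
  have hu8 : ContDiffOn ℝ (7 + 1 : ℕ) u t := by
    have := hu.mono interior_subset
    norm_num at this ⊢
    exact this
  set v : ℝ → ℝ := iteratedDeriv 2 u with hvdef
  have hv2 : v = deriv (deriv u) := by
    rw [hvdef, show (2:ℕ) = 0 + 1 + 1 from rfl, iteratedDeriv_succ, iteratedDeriv_succ,
      iteratedDeriv_zero]
  have hv6 : ContDiffOn ℝ (5 + 1 : ℕ) v t := by
    rw [hv2]
    have h7 : ContDiffOn ℝ 7 (deriv u) t := by
      apply (hu.mono interior_subset).deriv_of_isOpen ht
      norm_num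
    apply h7.deriv_of_isOpen ht
    norm_num
  have hvk : ∀ k : ℕ, iteratedDeriv k v x₀ = iteratedDeriv (k + 2) u x₀ := by
    intro k
    rw [hv2, show k + 2 = k + 1 + 1 from rfl, iteratedDeriv_succ', iteratedDeriv_succ']
  -- remainders
  have E1 := (taylor_comp_isBigO 7 1 u x₀ t ht hx hu8).mono (nhdsWithin_le_nhds : 𝓝[>] (0:ℝ) ≤ 𝓝 0)
  have Em1 := (taylor_comp_isBigO 7 (-1) u x₀ t ht hx hu8).mono (nhdsWithin_le_nhds : 𝓝[>] (0:ℝ) ≤ 𝓝 0)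
  have E2 := (taylor_comp_isBigO 7 2 u x₀ t ht hx hu8).mono (nhdsWithin_le_nhds : 𝓝[>] (0:ℝ) ≤ 𝓝 0)
  have Em2 := (taylor_comp_isBigO 7 (-2) u x₀ t ht hx hu8).mono (nhdsWithin_le_nhds : 𝓝[>] (0:ℝ) ≤ 𝓝 0)
  have F1 := (taylor_comp_isBigO 5 1 v x₀ t ht hx hv6).mono (nhdsWithin_le_nhds : 𝓝[>] (0:ℝ) ≤ 𝓝 0)
  have Fm1 := (taylor_comp_isBigO 5 (-1) v x₀ t ht hx hv6).mono (nhdsWithin_le_nhds : 𝓝[>] (0:ℝ) ≤ 𝓝 0)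
  set e : ℝ → ℝ → ℝ := fun c h => u (x₀ + c * h) -
      ∑ k ∈ Finset.range 8, iteratedDeriv k u x₀ / (k.factorial : ℝ) * (c * h) ^ k with hedef
  set f : ℝ → ℝ → ℝ := fun c h => v (x₀ + c * h) -
      ∑ k ∈ Finset.range 6, iteratedDeriv k v x₀ / (k.factorial : ℝ) * (c * h) ^ k with hfdef
  -- inverse square factor
  have hinv : ∀ A : ℝ, (fun h : ℝ => A / (11 * h ^ 2)) =O[𝓝[>] (0:ℝ)] fun h => (h ^ 2)⁻¹ := by
    intro A
    refine IsBigO.of_bound (|A| / 11) (Eventually.of_forall fun h => ?_)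
    have : A / (11 * h ^ 2) = (A / 11) * (h ^ 2)⁻¹ := by
      rw [div_eq_mul_inv, mul_inv, div_eq_mul_inv]; ring
    rw [this, norm_mul, Real.norm_eq_abs, abs_div]
    simp
  -- the three grouped O(h^6) pieces
  have heq68 : (fun h : ℝ => (h ^ 2)⁻¹ * h ^ 8) =ᶠ[𝓝[>] (0:ℝ)] fun h => h ^ 6 := by
    filter_upwards [self_mem_nhdsWithin] with h hh
    have : (h : ℝ) ≠ 0 := ne_of_gt hh
    field_simp
  have p1 : (fun h : ℝ => 12 / (11 * h ^ 2) * (e (-1) h + e 1 h)) =O[𝓝[>] (0:ℝ)]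
      fun h => h ^ 6 := (((hinv 12).mul (Em1.add E1)).trans_eventuallyEq heq68)
  have p2 : (fun h : ℝ => 3 / (44 * h ^ 2) * (e (-2) h + e 2 h)) =O[𝓝[>] (0:ℝ)]
      fun h => h ^ 6 := by
    have h44 : (fun h : ℝ => 3 / (44 * h ^ 2)) =O[𝓝[>] (0:ℝ)] fun h => (h ^ 2)⁻¹ := by
      have := hinv (3/4)
      refine this.congr_left fun h => ?_
      ring
    exact ((h44.mul (Em2.add E2)).trans_eventuallyEq heq68)
  have p3 : (fun h : ℝ => 2 / 11 * (f (-1) h + f 1 h)) =O[𝓝[>] (0:ℝ)]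
      fun h => h ^ 6 := (Fm1.add F1).const_mul_left _
  have hG : (fun h : ℝ => 12 / (11 * h ^ 2) * (e (-1) h + e 1 h) +
      3 / (44 * h ^ 2) * (e (-2) h + e 2 h) - 2 / 11 * (f (-1) h + f 1 h))
      =O[𝓝[>] (0:ℝ)] fun h => h ^ 6 := (p1.add p2).sub p3
  refine (Filter.EventuallyEq.trans_isBigO ?_ hG)
  filter_upwards [self_mem_nhdsWithin] with h hh
  have hne : (h : ℝ) ≠ 0 := ne_of_gt hh
  have r1 : x₀ - h = x₀ + (-1) * h := by ring
  have r2 : x₀ - 2 * h = x₀ + (-2) * h := by ring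
  have r3 : x₀ + h = x₀ + 1 * h := by ring
  have r4 : x₀ + 2 * h = x₀ + (2:ℝ) * h := by ring
  rw [r1, r2, r3, r4]
  simp only [hfdef, hvk]
  simp only [hedef, hvdef, Finset.sum_range_succ, Finset.sum_range_zero,
    iteratedDeriv_zero, Nat.factorial, Nat.reduceAdd]
  push_cast
  field_simp
  ring
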